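/- Let b > 0, let ν be the uniform probability measure on [0,1] ⊂ ℝ, μ = δ₀ the Dirac mass at 0, and let bΓ₀ := { g : ℝ → ℝ bounded continuous with g(x) − g(y) ≤ b|x−y| for all x,y ∈ ℝ }. Then G_{bΓ₀}(μ‖ν) := sup_{g ∈ bΓ₀} { g(0) − log ∫_0^1 e^{g(x)} dx } = log( b / (1 − e^{−b}) ). Moreover, the corresponding optimal transport quantity satisfies W_{bc}(μ,ν) := sup_{g ∈ bΓ₀} { g(0) − ∫_0^1 g(x) dx } = b/2. -/

import Mathlib

open MeasureTheory Filter Topology BoundedContinuousFunction Set ENNReal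

noncomputable section

variable {S : Type*}

/-- Integral of a function against a finite signed measure. -/
def sInt [MeasurableSpace S] (μ : MeasureTheory.SignedMeasure S) (g : S → ℝ) : ℝ :=
  ∫ x, g x ∂μ.toJordanDecomposition.posPart - ∫ x, g x ∂μ.toJordanDecomposition.negPart

/-- Γ-divergence, signed first argument. -/
def GdivS [MeasurableSpace S] [TopologicalSpace S]
    (Γ : Set (BoundedContinuousFunction S ℝ)) (μ : SignedMeasure S) (ν : Measure S) : EReal :=
  ⨆ g ∈ Γ, ((sInt μ g - Real.log (∫ x, Real.exp (g x) ∂ν) : ℝ) : EReal)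

/-- Γ-divergence. -/
def Gdiv [MeasurableSpace S] [TopologicalSpace S]
    (Γ : Set (BoundedContinuousFunction S ℝ)) (μ ν : Measure S) : EReal :=
  ⨆ g ∈ Γ, ((∫ x, g x ∂μ - Real.log (∫ x, Real.exp (g x) ∂ν) : ℝ) : EReal)

/-- W_Γ of a signed measure. -/
def WdivS [MeasurableSpace S] [TopologicalSpace S]
    (Γ : Set (BoundedContinuousFunction S ℝ)) (η : SignedMeasure S) : EReal :=
  ⨆ g ∈ Γ, ((sInt η g : ℝ) : EReal)

-- Relative entropy
open scoped Classical in
def relEnt [MeasurableSpace S] (γ ν : Measure S) : EReal :=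
  if γ ≪ ν ∧ Integrable (fun x => Real.log ((γ.rnDeriv ν x).toReal)) γ
  then ((∫ x, Real.log ((γ.rnDeriv ν x).toReal) ∂γ : ℝ) : EReal)
  else ⊤

/-- The weak topology on C_b(S) induced by M(S). -/
def cbWeak (S : Type*) [MeasurableSpace S] [TopologicalSpace S] :
    TopologicalSpace (BoundedContinuousFunction S ℝ) :=
  TopologicalSpace.induced (fun f (μ : SignedMeasure S) => sInt μ f) inferInstance

/-- Admissible sets of test functions. -/
structure Admissible [MeasurableSpace S] [TopologicalSpace S]
    (Γ : Set (BoundedContinuousFunction S ℝ)) : Prop where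
  convex : Convex ℝ Γ
  closed : @IsClosed _ (cbWeak S) Γ
  neg_mem : ∀ g ∈ Γ, -g ∈ Γ
  const_mem : ∀ r : ℝ, BoundedContinuousFunction.const S r ∈ Γ
  determining : ∀ μ ν : Measure S, IsProbabilityMeasure μ → IsProbabilityMeasure ν →
    (∀ g ∈ Γ, ∫ x, g x ∂μ = ∫ x, g x ∂ν) → μ = ν

/-- Bounded continuous c-Lipschitz functions. -/
def LipB [TopologicalSpace S] (c : S → S → ℝ≥0∞) : Set (BoundedContinuousFunction S ℝ) :=
  {f | ∀ x y, ((f x - f y : ℝ) : EReal) ≤ (c x y : EReal)}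

/-- Continuous (possibly unbounded) c-Lipschitz functions. -/
def LipU [TopologicalSpace S] (c : S → S → ℝ≥0∞) : Set (S → ℝ) :=
  {f | Continuous f ∧ ∀ x y, ((f x - f y : ℝ) : EReal) ≤ (c x y : EReal)}

/-- Optimal transport cost in dual form. -/
def Wc [MeasurableSpace S] [TopologicalSpace S] (c : S → S → ℝ≥0∞) (μ γ : Measure S) : EReal :=
  ⨆ g ∈ LipB c, ((∫ x, g x ∂μ - ∫ x, g x ∂γ : ℝ) : EReal)

/-- Topological support of a measure. -/
def msupport [TopologicalSpace S] [MeasurableSpace S] (ν : Measure S) : Set S :=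
  {x | ∀ U ∈ 𝓝 x, 0 < ν U}

/-- Upper (outer) Lebesgue integral. -/
def upperLintegral [MeasurableSpace S] (π : Measure S) (F : S → ℝ≥0∞) : ℝ≥0∞ :=
  ⨅ G ∈ {G : S → ℝ≥0∞ | Measurable G ∧ ∀ x, F x ≤ G x}, ∫⁻ x, G x ∂π


lemma int_exp_aux (b : ℝ) (hb : 0 < b) :
    ∫ x in Set.Icc (0:ℝ) 1, Real.exp (-(b*x)) = (1 - Real.exp (-b))/b := by
  rw [MeasureTheory.integral_Icc_eq_integral_Ioc,
    ← intervalIntegral.integral_of_le zero_le_one]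
  have h : (∫ x in (0:ℝ)..1, Real.exp (-b * x)) =
      (-b)⁻¹ • ∫ x in (-b*0)..(-b*1), Real.exp x :=
    intervalIntegral.integral_comp_mul_left Real.exp (by linarith)
  simp only [neg_mul] at h
  rw [h, integral_exp, smul_eq_mul,
    show -(b*0) = (0:ℝ) by ring, show -(b*1) = -b by ring, Real.exp_zero,
    eq_div_iff hb.ne']
  field_simp
  ring

lemma int_lin_aux (b : ℝ) : ∫ x in Set.Icc (0:ℝ) 1, (-(b*x)) = -(b/2) := by
  rw [MeasureTheory.integral_Icc_eq_integral_Ioc,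
    ← intervalIntegral.integral_of_le zero_le_one]
  rw [intervalIntegral.integral_neg, intervalIntegral.integral_const_mul, integral_id]
  ring

def gOpt (b : ℝ) : BoundedContinuousFunction ℝ ℝ :=
  BoundedContinuousFunction.ofNormedAddCommGroup (fun x => max (-(abs b * abs x)) (-(abs b)))
    (by fun_prop) |b|
    (by
      intro x
      rw [Real.norm_eq_abs, abs_le]
      constructor
      · exact le_max_right _ _
      · exact max_le (by nlinarith [abs_nonneg x, abs_nonneg b]) (by nlinarith [abs_nonneg b]))

lemma gOpt_apply (b x : ℝ) : gOpt b x = max (-(abs b * abs x)) (-(abs b)) := rfl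

lemma gOpt_eq (b : ℝ) {x : ℝ} (hx : x ∈ Set.Icc (0:ℝ) 1) (hb : 0 < b) :
    gOpt b x = -(b*x) := by
  rw [gOpt_apply, abs_of_pos hb, abs_of_nonneg hx.1, max_eq_left]
  nlinarith [hx.1, hx.2]

lemma gOpt_mem (b : ℝ) (hb : 0 < b) :
    ∀ x y : ℝ, gOpt b x - gOpt b y ≤ b * |x - y| := by
  intro x y
  have h1 : |gOpt b x - gOpt b y| ≤ |(-(abs b * abs x)) - (-(abs b * abs y))| := by
    rw [gOpt_apply, gOpt_apply]; exact abs_max_sub_max_le_abs _ _ _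
  have h2 : |(-(abs b * abs x)) - (-(abs b * abs y))| = b * |(abs x - abs y)| := by
    rw [show (-(abs b * abs x)) - (-(abs b * abs y)) = abs b * (abs y - abs x) by ring, abs_mul,
      abs_abs, abs_of_pos hb, abs_sub_comm]
  have h3 : |(abs x - abs y)| ≤ |x - y| := abs_abs_sub_abs_le_abs_sub x y
  calc gOpt b x - gOpt b y ≤ |gOpt b x - gOpt b y| := le_abs_self _
    _ ≤ b * |(abs x - abs y)| := by rw [← h2]; exact h1
    _ ≤ b * |x - y| := by nlinarith

theorem stmt18 (b : ℝ) (hb : 0 < b) :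
    (⨆ g ∈ {g : BoundedContinuousFunction ℝ ℝ | ∀ x y : ℝ, g x - g y ≤ b * |x - y|},
        ((g 0 - Real.log (∫ x in Set.Icc (0:ℝ) 1, Real.exp (g x)) : ℝ) : EReal)) =
      ((Real.log (b / (1 - Real.exp (-b))) : ℝ) : EReal) ∧
    (⨆ g ∈ {g : BoundedContinuousFunction ℝ ℝ | ∀ x y : ℝ, g x - g y ≤ b * |x - y|},
        ((g 0 - ∫ x in Set.Icc (0:ℝ) 1, g x : ℝ) : EReal)) = ((b / 2 : ℝ) : EReal) := by
  have hE : Real.exp (-b) < 1 := Real.exp_lt_one_iff.mpr (by linarith)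
  have hden : 0 < 1 - Real.exp (-b) := by linarith
  have hg0 : gOpt b 0 = 0 := by
    rw [gOpt_apply]; simp
  have hlog : Real.log (b / (1 - Real.exp (-b))) = -Real.log ((1 - Real.exp (-b))/b) := by
    rw [← Real.log_inv, inv_div]
  -- key pointwise bound
  have hkey : ∀ g : BoundedContinuousFunction ℝ ℝ,
      (∀ x y : ℝ, g x - g y ≤ b * |x - y|) →
      ∀ x ∈ Set.Icc (0:ℝ) 1, g 0 + (-(b*x)) ≤ g x := by
    intro g hg x hx
    have := hg 0 x
    rw [show (0:ℝ) - x = -x by ring, abs_neg, abs_of_nonneg hx.1] at this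
    linarith
  constructor
  · apply le_antisymm
    · apply iSup₂_le
      intro g hg
      rw [EReal.coe_le_coe_iff]
      set I := ∫ x in Set.Icc (0:ℝ) 1, Real.exp (g x) with hI
      have hint1 : IntegrableOn (fun x => Real.exp (g x)) (Set.Icc (0:ℝ) 1) :=
        (Real.continuous_exp.comp g.continuous).integrableOn_Icc
      have hint2 : IntegrableOn (fun x => Real.exp (g 0) * Real.exp (-(b*x)))
          (Set.Icc (0:ℝ) 1) := by
        apply Continuous.integrableOn_Icc; fun_prop
      have hmono : Real.exp (g 0) * ((1 - Real.exp (-b))/b) ≤ I := by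
        have : ∫ x in Set.Icc (0:ℝ) 1, Real.exp (g 0) * Real.exp (-(b*x)) ≤ I :=
          setIntegral_mono_on hint2 hint1 measurableSet_Icc (by
            intro x hx
            rw [← Real.exp_add]
            exact Real.exp_le_exp.mpr (hkey g hg x hx))
        rwa [MeasureTheory.integral_const_mul, int_exp_aux b hb] at this
      have hpos : 0 < Real.exp (g 0) * ((1 - Real.exp (-b))/b) := by positivity
      have hlogle : Real.log (Real.exp (g 0) * ((1 - Real.exp (-b))/b)) ≤ Real.log I :=
        Real.log_le_log hpos hmono
      rw [Real.log_mul (Real.exp_pos _).ne' (by positivity), Real.log_exp] at hlogle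
      rw [hlog]; linarith
    · apply le_iSup₂_of_le (gOpt b) (gOpt_mem b hb)
      rw [EReal.coe_le_coe_iff]
      have : ∫ x in Set.Icc (0:ℝ) 1, Real.exp (gOpt b x)
          = (1 - Real.exp (-b))/b := by
        rw [← int_exp_aux b hb]
        apply setIntegral_congr_fun measurableSet_Icc
        intro x hx
        simp only
        rw [gOpt_eq b hx hb]
      rw [this, hg0, hlog]
      norm_num
  · apply le_antisymm
    · apply iSup₂_le
      intro g hg
      rw [EReal.coe_le_coe_iff]
      have hint1 : IntegrableOn (fun x => g x) (Set.Icc (0:ℝ) 1) :=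
        g.continuous.integrableOn_Icc
      have hint2 : IntegrableOn (fun x => g 0 + (-(b*x))) (Set.Icc (0:ℝ) 1) := by
        apply Continuous.integrableOn_Icc; fun_prop
      have hmono : ∫ x in Set.Icc (0:ℝ) 1, (g 0 + (-(b*x))) ≤ ∫ x in Set.Icc (0:ℝ) 1, g x :=
        setIntegral_mono_on hint2 hint1 measurableSet_Icc (hkey g hg)
      have hconst : ∫ x in Set.Icc (0:ℝ) 1, (g 0 + (-(b*x)))
          = g 0 + (-(b/2)) := by
        rw [MeasureTheory.integral_add ((integrableOn_const_iff (C := g 0)).mpr (Or.inr (by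
          simp [Real.volume_Icc]))) (by apply Continuous.integrableOn_Icc; fun_prop),
          MeasureTheory.setIntegral_const, int_lin_aux b]
        simp [Real.volume_Icc]
      rw [hconst] at hmono
      linarith
    · apply le_iSup₂_of_le (gOpt b) (gOpt_mem b hb)
      rw [EReal.coe_le_coe_iff]
      have : ∫ x in Set.Icc (0:ℝ) 1, gOpt b x = -(b/2) := by
        rw [← int_lin_aux b]
        apply setIntegral_congr_fun measurableSet_Icc
        intro x hx
        exact gOpt_eq b hx hb
      rw [this, hg0]
      linarith


end
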